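/- Let k,m,c ≥ 0, let (G,s_1,t_1,…,s_k,t_k) be a problem instance, and let (L_1,X_1,Y_1),…,(L_n,X_n,Y_n) be (k,m,c)-rails in it with (L_p,X_p,Y_p)→(L_{p+1},X_{p+1},Y_{p+1}) for 1 ≤ p ≤ n−1, where L_p=(M_{p,1},…,M_{p,k}). For 1 ≤ p ≤ n and 1 ≤ j ≤ k let P_{p,j} be the union of M_{1,j},…,M_{p,j}. Then P_{p,j} is a path from the first vertex of M_{1,j} to the last vertex of M_{p,j}. -/

import Mathlib

open List

/-! Basic digraph/path definitions.  A digraph on `V` is a relation `G : V → V → Prop`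
(looplessness is expressed by `Irreflexive G`).  A (directed) path is a nonempty list of
distinct vertices in which consecutive vertices are joined by edges of `G`. -/

/-- `uv` is an edge of the path `P`, i.e. `u,v` are consecutive on `P`. -/
def PEdge {V : Type} (P : List V) (u v : V) : Prop := [u, v] <:+: P

/-- `P` is a directed path of the digraph `G`. -/
def IsPath {V : Type} (G : V → V → Prop) (P : List V) : Prop :=
  P ≠ [] ∧ P.Nodup ∧ P.Chain' G

/-- `P` is a minimal path of `G`: for every edge `v_i v_j` of `G` between vertices of `P`,
`j ≤ i + 1`. -/
def IsMinimal {V : Type} (G : V → V → Prop) (P : List V) : Prop :=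
  ∀ i j : Fin P.length, G (P.get i) (P.get j) → (j : ℕ) ≤ (i : ℕ) + 1

/-- `G` is `d`-path-dominant. -/
def PathDominant {V : Type} (d : ℕ) (G : V → V → Prop) : Prop :=
  ∀ P : List V, IsPath G P → IsMinimal G P → P.length = d →
    ∀ v : V, v ∈ P ∨ (∃ w ∈ P, G v w) ∨ (∃ w ∈ P, G w v)

/-- A linkage: a tuple of pairwise vertex-disjoint paths. -/
def IsLinkage {V : Type} (G : V → V → Prop) {k : ℕ} (L : Fin k → List V) : Prop :=
  (∀ i, IsPath G (L i)) ∧ ∀ i j : Fin k, i ≠ j → ∀ v, v ∈ L i → v ∉ L j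

/-- `v` is `Q`-outward: `v ∉ Q` and no vertex of `Q` is adjacent from `v`. -/
def Outward {V : Type} (G : V → V → Prop) (Q : List V) (v : V) : Prop :=
  v ∉ Q ∧ ∀ w ∈ Q, ¬ G v w

/-- `v` is `Q`-inward: `v ∉ Q` and no vertex of `Q` is adjacent to `v`. -/
def Inward {V : Type} (G : V → V → Prop) (Q : List V) (v : V) : Prop :=
  v ∉ Q ∧ ∀ w ∈ Q, ¬ G w v

section Inhab
variable {V : Type} [Inhabited V]

/-- A linkage for the problem instance `(G, s₁, t₁, …, s_k, t_k)`. -/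
def IsLinkageFor (G : V → V → Prop) {k : ℕ} (s t : Fin k → V) (L : Fin k → List V) : Prop :=
  IsLinkage G L ∧ ∀ i, (L i).head! = s i ∧ (L i).getLast! = t i

/-- `x` is a quality: there is an `x`-linkage for the instance. -/
def IsQuality (G : V → V → Prop) {k : ℕ} (s t : Fin k → V) (x : Fin k → ℕ) : Prop :=
  ∃ L : Fin k → List V, IsLinkageFor G s t L ∧ ∀ i, (L i).length = x i

/-- `x` is a key quality: a quality not strictly dominating any other quality. -/
def IsKeyQuality (G : V → V → Prop) {k : ℕ} (s t : Fin k → V) (x : Fin k → ℕ) : Prop :=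
  IsQuality G s t x ∧ ¬ ∃ y : Fin k → ℕ, IsQuality G s t y ∧ y ≤ x ∧ y ≠ x

/-- `v` is an internal vertex of the linkage `M`. -/
def Internal {k : ℕ} (M : Fin k → List V) (v : V) : Prop :=
  (∃ i, v ∈ M i) ∧ ∀ i, v ≠ (M i).head! ∧ v ≠ (M i).getLast!

/-- The linkage `M` is internally disjoint from the linkage `L`. -/
def InternallyDisjointFrom {k l : ℕ} (M : Fin k → List V) (L : Fin l → List V) : Prop :=
  ∀ v, Internal M v → ∀ i, v ∉ L i

/-- A planar `(Q,R)`-matching of cardinality `n`. -/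
def IsPlanarMatching (G : V → V → Prop) (Q R : List V) {n : ℕ} (M : Fin n → List V) : Prop :=
  IsLinkage G M ∧ (∀ j, (M j).length = 2 ∨ (M j).length = 3) ∧
  (List.ofFn fun j => (M j).head!).Sublist Q ∧
  (List.ofFn fun j => (M j).getLast!).Sublist R

/-- A planar `(Q,R)`-matching is `s`-spaced. -/
def SSpaced (Q R : List V) {n : ℕ} (M : Fin n → List V) (s : ℕ) : Prop :=
  (∀ W : List V, W <:+: Q → W.length ≤ s →
    ∀ j j' : Fin n, (∃ v ∈ W, v ∈ M j) → (∃ v ∈ W, v ∈ M j') → j = j') ∧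
  (∀ W : List V, W <:+: R → W.length ≤ s →
    ∀ j j' : Fin n, (∃ v ∈ W, v ∈ M j) → (∃ v ∈ W, v ∈ M j') → j = j')

/-- `A(L)`: vertices outside `V(L)` that are `(M_j ∖ t(M_j))`-inward for some `j`
with `t(M_j) ≠ t_j`. -/
def RailA (G : V → V → Prop) {k : ℕ} (t : Fin k → V) (L : Fin k → List V) : Set V :=
  {v | (∀ i, v ∉ L i) ∧ ∃ j, (L j).getLast! ≠ t j ∧ ∀ w ∈ (L j).dropLast, ¬ G w v}

/-- `B(L)`: vertices outside `V(L)` that are `(M_j ∖ s(M_j))`-outward for some `j`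
with `s(M_j) ≠ s_j`. -/
def RailB (G : V → V → Prop) {k : ℕ} (s : Fin k → V) (L : Fin k → List V) : Set V :=
  {v | (∀ i, v ∉ L i) ∧ ∃ j, (L j).head! ≠ s j ∧ ∀ w ∈ (L j).tail, ¬ G v w}

/-- The confusion of the linkage `L`, namely `|A(L) ∩ B(L)|`. -/
noncomputable def Confusion (G : V → V → Prop) {k : ℕ} (s t : Fin k → V)
    (L : Fin k → List V) : ℕ :=
  (RailA G t L ∩ RailB G s L).ncard

/-- `(L, X, Y)` is a `(k,m,c)`-rail in the problem instance. -/
def IsRail (G : V → V → Prop) {k : ℕ} (s t : Fin k → V) (m c : ℕ)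
    (L : Fin k → List V) (X Y : Set V) : Prop :=
  IsLinkage G L ∧
  (∀ j, (L j).length ≤ 2*m ∧
    ((L j).length < 2*m → (L j).head! = s j ∨ (L j).getLast! = t j)) ∧
  Confusion G s t L ≤ c ∧
  Disjoint X Y ∧
  X ⊆ RailA G t L ∧ Y ⊆ RailB G s L ∧ X ∪ Y = RailA G t L ∪ RailB G s L

end Inhab

/-- The data of a potential rail: a `k`-tuple of paths together with two vertex sets. -/
abbrev RailT (V : Type) (k : ℕ) := (Fin k → List V) × Set V × Set V

section Inhab2
variable {V : Type} [Inhabited V]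

/-- The edge relation `(L,X,Y) → (L',X',Y')` between distinct rails. -/
def RailStep (G : V → V → Prop) {k : ℕ} (r r' : RailT V k) : Prop :=
  r ≠ r' ∧
  (∀ i, ∃ W : List V, IsPath G W ∧ W.head! = (r.1 i).head! ∧
    W.getLast! = (r'.1 i).getLast! ∧
    (∀ v, v ∈ W ↔ v ∈ r.1 i ∨ v ∈ r'.1 i) ∧
    (∀ u v, PEdge W u v ↔ PEdge (r.1 i) u v ∨ PEdge (r'.1 i) u v)) ∧
  (∀ i, ∀ v ∈ r'.1 i, v ∈ r.1 i ∨ v ∈ r.2.1) ∧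
  (∀ i, ∀ v ∈ r.1 i, v ∈ r'.1 i ∨ v ∈ r'.2.2) ∧
  r'.2.1 ⊆ r.2.1 ∧ r.2.2 ⊆ r'.2.2

/-- A path from `s₀` to `t₀` in the `(k,m,c)`-tracker, recorded by its list of
intermediate rail vertices. -/
def IsTrackerPath (G : V → V → Prop) {k : ℕ} (s t : Fin k → V) (m c : ℕ)
    (rs : List (RailT V k)) : Prop :=
  rs ≠ [] ∧ rs.Nodup ∧ rs.Chain' (RailStep G) ∧
  (∀ r ∈ rs, IsRail G s t m c r.1 r.2.1 r.2.2) ∧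
  (∀ r ∈ rs.head?, ∀ j, (r.1 j).head! = s j) ∧
  (∀ r ∈ rs.getLast?, ∀ j, (r.1 j).getLast! = t j)

end Inhab2

/-- A tracker path traces the linkage `P`: each `P j` is the union (as a digraph) of the
`j`-th members of the rails of the path. -/
def Traces {V : Type} {k : ℕ} (rs : List (RailT V k)) (P : Fin k → List V) : Prop :=
  ∀ j, (∀ v, v ∈ P j ↔ ∃ r ∈ rs, v ∈ r.1 j) ∧
       (∀ u v, PEdge (P j) u v ↔ ∃ r ∈ rs, PEdge (r.1 j) u v)

section Dec
variable {V : Type} [DecidableEq V]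

/-- `V(L)`, the set of vertices of the linkage `L`, as a finset. -/
def LV {k : ℕ} (L : Fin k → List V) : Finset V :=
  Finset.univ.biUnion fun i => (L i).toFinset

/-- `B` is acceptable for the linkage `L` (with parameters `d, k`). -/
def Acceptable [Inhabited V] (G : V → V → Prop) (d k : ℕ) (L : Fin k → List V)
    (B : Finset V) : Prop :=
  (∀ j : Fin k, ∀ u v : V, PEdge (L j) u v → v ∈ B → u ∈ B) ∧
  ∀ i j : Fin k, ¬ ∃ M : Fin ((k-1)*d + k^2 + 2) → List V,
    IsPlanarMatching G ((L i).filter (· ∈ B)) ((L j).filter (· ∉ B)) M ∧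
    InternallyDisjointFrom M L

/-- Labels along a tracker path, after the first rail: consecutive rails `r, r'`
contribute `|V(M'_j) ∖ V(M_j)|` in coordinate `j`. -/
def labelFrom {k : ℕ} : RailT V k → List (RailT V k) → (Fin k → ℕ)
  | _, [] => fun _ => 0
  | r, r' :: rest => (fun j => ((r'.1 j).toFinset \ (r.1 j).toFinset).card) + labelFrom r' rest

/-- The total label `l(P)` of a tracker path with rail list `rs`: the edge from `s₀`
contributes `|V(M_j)|`, each rail-to-rail edge contributes the difference counts, and the
edge to `t₀` contributes `0`. -/
def pathLabel {k : ℕ} : List (RailT V k) → (Fin k → ℕ)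
  | [] => fun _ => 0
  | r :: rest => (fun j => (r.1 j).toFinset.card) + labelFrom r rest

/-- `Q_{p,j}`: the maximal subpath of `P` with at most `m` vertices whose last vertex is
the last vertex of `P` among `v_1, …, v_p` (null if there is none). -/
def Qseg (m : ℕ) (e : List V) (p : ℕ) (P : List V) : List V :=
  (P.filter (· ∈ e.take p)).drop ((P.filter (· ∈ e.take p)).length - m)

/-- `R_{p,j}`: the maximal subpath of `P` with at most `m` vertices whose first vertex is
the first vertex of `P` among `v_{p+1}, …, v_n` (null if there is none). -/
def Rseg (m : ℕ) (e : List V) (p : ℕ) (P : List V) : List V :=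
  (P.filter (· ∈ e.drop p)).take m

/-- `M_{p,j} = Q_{p,j} ∪ R_{p,j}` (together with the connecting edge of `P` when both
are non-null). -/
def Mseg (m : ℕ) (e : List V) (p : ℕ) (P : List V) : List V :=
  Qseg m e p P ++ Rseg m e p P

end Dec

/-! ### Auxiliary lemmas for `stmt12` -/

section Stmt12Aux
variable {V : Type}

lemma head?_eq_head!' [Inhabited V] {l : List V} (h : l ≠ []) : l.head? = some l.head! := by
  cases l with
  | nil => exact absurd rfl h
  | cons a l => rfl

lemma getLast?_eq_getLast!' [Inhabited V] {l : List V} (h : l ≠ []) :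
    l.getLast? = some l.getLast! := by
  have h1 := List.getLast?_eq_getLast_of_ne_nil h
  rw [h1, List.getLast!_of_getLast? h1]

lemma head!_append' [Inhabited V] {l₁ l₂ : List V} (h : l₁ ≠ []) :
    (l₁ ++ l₂).head! = l₁.head! := by
  cases l₁ with
  | nil => exact absurd rfl h
  | cons a l => rfl

lemma getLast!_append' [Inhabited V] {l₁ l₂ : List V} (h : l₂ ≠ []) :
    (l₁ ++ l₂).getLast! = l₂.getLast! := by
  have h1 : (l₁ ++ l₂).getLast? = l₂.getLast? := List.getLast?_append_of_ne_nil _ h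
  rw [getLast?_eq_getLast!' h] at h1
  exact List.getLast!_of_getLast? h1

lemma prefix_singleton_iff {v : V} {l : List V} : [v] <+: l ↔ l.head? = some v := by
  cases l with
  | nil => simp
  | cons a l =>
    constructor
    · rintro ⟨t, ht⟩
      simp only [List.singleton_append, List.cons.injEq] at ht
      simp [ht.1]
    · intro h
      simp only [List.head?_cons, Option.some.injEq] at h
      exact ⟨l, by simp [h]⟩

lemma pair_prefix_iff {u v : V} {l : List V} :
    [u, v] <+: l ↔ l.head? = some u ∧ l.tail.head? = some v := by
  cases l with
  | nil => simp
  | cons a l =>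
    rw [show ([u,v] : List V) = u :: [v] from rfl, List.cons_prefix_cons]
    simp [prefix_singleton_iff, eq_comm]

lemma pedge_append {u v : V} {l₁ l₂ : List V} :
    [u, v] <:+: l₁ ++ l₂ ↔ [u, v] <:+: l₁ ∨ [u, v] <:+: l₂ ∨
      (l₁.getLast? = some u ∧ l₂.head? = some v) := by
  induction l₁ with
  | nil => simp
  | cons a l₁ ih =>
    rw [List.cons_append, List.infix_cons_iff, ih, List.infix_cons_iff, pair_prefix_iff,
      pair_prefix_iff]
    cases l₁ with
    | nil =>
      simp only [List.nil_append, List.head?_cons, List.tail_cons, Option.some.injEq,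
        List.getLast?_singleton, List.getLast?_nil, reduceCtorEq, false_and, or_false,
        List.infix_nil, List.tail_nil, List.head?_nil, and_false]
      tauto
    | cons b l₁ =>
      simp only [List.head?_cons, List.tail_cons, List.cons_append, List.head?_cons,
        List.getLast?_cons_cons]
      tauto

lemma no_edge_from_last {u v : V} {l : List V} (hn : l.Nodup) (hl : l.getLast? = some u) :
    ¬ [u, v] <:+: l := by
  rintro ⟨s, t, hst⟩
  have hl' : l = s ++ u :: v :: t := by simpa using hst.symm
  subst hl'
  rw [List.getLast?_append_of_ne_nil _ (by simp), List.getLast?_cons_cons] at hl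
  have hu : u ∈ v :: t := List.mem_of_getLast? hl
  have := (List.nodup_append.mp hn).2.1
  simp only [List.nodup_cons] at this
  exact this.1 hu

lemma prefix_of_edges : ∀ (P : List V), ∀ W : List V, P.Nodup → W.Nodup →
    P.head? = W.head? → (∀ u v, [u, v] <:+: P → [u, v] <:+: W) → P ≠ [] → P <+: W := by
  intro P
  induction P with
  | nil => simp
  | cons a P ih =>
    intro W hP hW hh hE _
    cases W with
    | nil => simp at hh
    | cons a' w =>
      simp only [List.head?_cons, Option.some.injEq] at hh
      subst hh
      cases P with
      | nil => exact ⟨w, rfl⟩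
      | cons b P' =>
        have hab : [a, b] <:+: a :: w := hE a b ⟨[], P', rfl⟩
        have haw : a ∉ w := (List.nodup_cons.mp hW).1
        have hbw : w.head? = some b := by
          rcases List.infix_cons_iff.mp hab with h | h
          · exact (pair_prefix_iff.mp h).2
          · exact absurd (h.subset (show a ∈ [a,b] by simp)) haw
        cases w with
        | nil => simp at hbw
        | cons b' w' =>
          simp only [List.head?_cons, Option.some.injEq] at hbw
          have hbw' : b = b' := hbw.symm
          subst hbw'
          have hpre : (b :: P') <+: (b :: w') := by
            apply ih
            · exact (List.nodup_cons.mp hP).2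
            · exact (List.nodup_cons.mp hW).2
            · rfl
            · intro u v huv
              have h1 : [u, v] <:+: a :: b :: w' := hE u v (huv.trans ⟨[a], [], by simp⟩)
              rcases List.infix_cons_iff.mp h1 with h | h
              · have hua : u = a := by
                  have := (pair_prefix_iff.mp h).1
                  simpa [eq_comm] using this
                exfalso
                have huP : u ∈ b :: P' := huv.subset (by simp)
                rw [hua] at huP
                exact (List.nodup_cons.mp hP).1 huP
              · exact h
            · simp
          exact (List.cons_prefix_cons).mpr ⟨rfl, hpre⟩

end Stmt12Aux

theorem stmt12 {V : Type} [Fintype V] [DecidableEq V] [Inhabited V]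
    (G : V → V → Prop) (hG : Irreflexive G)
    (k m c : ℕ) (s t : Fin k → V) (n : ℕ)
    (M : ℕ → Fin k → List V) (X Y : ℕ → Set V)
    (hrail : ∀ p < n, IsRail G s t m c (M p) (X p) (Y p))
    (hstep : ∀ p, p + 1 < n → RailStep G (M p, X p, Y p) (M (p+1), X (p+1), Y (p+1))) :
    ∀ p < n, ∀ j : Fin k, ∃ W : List V, IsPath G W ∧
      W.head! = (M 0 j).head! ∧ W.getLast! = (M p j).getLast! ∧
      (∀ v, v ∈ W ↔ ∃ q ≤ p, v ∈ M q j) ∧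
      (∀ u v, PEdge W u v ↔ ∃ q ≤ p, PEdge (M q j) u v) := by
  have hXmono : ∀ r, r < n → ∀ q ≤ r, X r ⊆ X q := by
    intro r hr
    induction r with
    | zero =>
      intro q hq
      have : q = 0 := Nat.le_zero.mp hq
      subst this; exact subset_rfl
    | succ r ih =>
      intro q hq
      rcases Nat.eq_or_lt_of_le hq with h | h
      · subst h; exact subset_rfl
      · exact ((hstep r hr).2.2.2.2.1).trans
          (ih (Nat.lt_of_succ_lt hr) q (Nat.lt_succ_iff.mp h))
  intro p
  induction p with
  | zero =>
    intro hp j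
    refine ⟨M 0 j, (hrail 0 hp).1.1 j, rfl, rfl, ?_, ?_⟩
    · intro v
      constructor
      · intro hv; exact ⟨0, le_refl _, hv⟩
      · rintro ⟨q, hq, hv⟩
        have : q = 0 := Nat.le_zero.mp hq
        subst this; exact hv
    · intro u v
      constructor
      · intro h; exact ⟨0, le_refl _, h⟩
      · rintro ⟨q, hq, h⟩
        have : q = 0 := Nat.le_zero.mp hq
        subst this; exact h
  | succ p ih =>
    intro hp j
    have hp' : p < n := Nat.lt_of_succ_lt hp
    obtain ⟨W, ⟨hWne, hWnd, hWch⟩, hWhead, hWlast, hWmem, hWedge⟩ := ih hp' j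
    obtain ⟨hne, hWpall, hXstep, hYstep, hXsub, hYsub⟩ := hstep p hp
    obtain ⟨Wp, ⟨hWpne, hWpnd, hWpch⟩, hWphead, hWplast, hWpmem, hWpedge⟩ := hWpall j
    obtain ⟨hMpne, hMpnd, hMpch⟩ := (hrail p hp').1.1 j
    -- `M p j` is a prefix of `Wp`
    have hpre : M p j <+: Wp :=
      prefix_of_edges _ _ hMpnd hWpnd
        (by rw [head?_eq_head!' hMpne, head?_eq_head!' hWpne, hWphead])
        (fun u v h => (hWpedge u v).mpr (Or.inl h)) hMpne
    obtain ⟨β, hβ⟩ := hpre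
    have hnd2 : (M p j ++ β).Nodup := by rw [hβ]; exact hWpnd
    have hch2 : (M p j ++ β).Chain' G := by rw [hβ]; exact hWpch
    have hdisj : List.Disjoint (M p j) β := (List.nodup_append'.mp hnd2).2.2
    have hβnd : β.Nodup := (List.nodup_append'.mp hnd2).2.1
    have hβsub : ∀ v ∈ β, v ∈ M (p+1) j := by
      intro v hv
      have hvWp : v ∈ Wp := by rw [← hβ]; exact List.mem_append_right _ hv
      rcases (hWpmem v).mp hvWp with h | h
      · exact absurd hv (hdisj h)
      · exact h
    have hβW : ∀ v ∈ β, v ∉ W := by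
      intro v hv hvW
      rcases hXstep j v (hβsub v hv) with h | h
      · exact hdisj h hv
      · obtain ⟨q, hq, hvq⟩ := (hWmem v).mp hvW
        have hX : v ∈ X q := hXmono p hp' q hq h
        exact (((hrail q (lt_of_le_of_lt hq hp')).2.2.2.2.1) hX).1 j hvq
    have hMplast? : (M p j).getLast? = some (M p j).getLast! := getLast?_eq_getLast!' hMpne
    have hWlast? : W.getLast? = some (M p j).getLast! := by
      rw [getLast?_eq_getLast!' hWne, hWlast]
    refine ⟨W ++ β, ⟨?_, ?_, ?_⟩, ?_, ?_, ?_, ?_⟩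
    · intro h
      exact hWne (List.append_eq_nil_iff.mp h).1
    · exact List.nodup_append'.mpr ⟨hWnd, hβnd, fun a ha hb => hβW a hb ha⟩
    · refine List.isChain_append.mpr ⟨hWch, (List.isChain_append.mp hch2).2.1, ?_⟩
      intro x hx y hy
      have hx' : x = (M p j).getLast! := by
        rw [hWlast?] at hx
        exact (Option.mem_some_iff.mp hx).symm
      refine (List.isChain_append.mp hch2).2.2 x ?_ y hy
      rw [hMplast?]
      exact Option.mem_some_iff.mpr hx'.symm
    · rw [head!_append' hWne, hWhead]
    · rcases eq_or_ne β [] with hβ0 | hβ0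
      · have hWpeq : Wp = M p j := by rw [← hβ, hβ0, List.append_nil]
        rw [hβ0, List.append_nil, hWlast, ← hWpeq]
        exact hWplast
      · rw [getLast!_append' hβ0, ← getLast!_append' (l₁ := M p j) hβ0, hβ]
        exact hWplast
    · intro v
      constructor
      · intro hv
        rcases List.mem_append.mp hv with h | h
        · obtain ⟨q, hq, h⟩ := (hWmem v).mp h
          exact ⟨q, le_trans hq (Nat.le_succ p), h⟩
        · exact ⟨p+1, le_refl _, hβsub v h⟩
      · rintro ⟨q, hq, hv⟩
        rcases Nat.eq_or_lt_of_le hq with h | h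
        · subst h
          have : v ∈ Wp := (hWpmem v).mpr (Or.inr hv)
          rw [← hβ] at this
          rcases List.mem_append.mp this with h' | h'
          · exact List.mem_append_left _ ((hWmem v).mpr ⟨p, le_refl _, h'⟩)
          · exact List.mem_append_right _ h'
        · exact List.mem_append_left _ ((hWmem v).mpr ⟨q, Nat.lt_succ_iff.mp h, hv⟩)
    · intro u v
      constructor
      · intro h
        rcases pedge_append.mp h with h | h | ⟨h1, h2⟩
        · obtain ⟨q, hq, h⟩ := (hWedge u v).mp h
          exact ⟨q, le_trans hq (Nat.le_succ p), h⟩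
        · have hWpe : PEdge Wp u v := by
            rw [← hβ]
            exact h.trans (List.suffix_append _ _).isInfix
          rcases (hWpedge u v).mp hWpe with h' | h'
          · exact absurd (h.subset (show u ∈ [u,v] by simp))
              (fun hu => hdisj (h'.subset (show u ∈ [u,v] by simp)) hu)
          · exact ⟨p+1, le_refl _, h'⟩
        · have hu : (M p j).getLast? = some u := by rw [hWlast? ] at h1; rw [hMplast?, h1]
          have hWpe : PEdge Wp u v := by
            rw [← hβ]
            exact pedge_append.mpr (Or.inr (Or.inr ⟨hu, h2⟩))
          rcases (hWpedge u v).mp hWpe with h' | h'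
          · exact absurd h' (no_edge_from_last hMpnd hu)
          · exact ⟨p+1, le_refl _, h'⟩
      · rintro ⟨q, hq, h⟩
        rcases Nat.eq_or_lt_of_le hq with h' | h'
        · subst h'
          have hWpe : PEdge Wp u v := (hWpedge u v).mpr (Or.inr h)
          rw [← hβ] at hWpe
          rcases pedge_append.mp hWpe with h'' | h'' | ⟨h1, h2⟩
          · exact ((hWedge u v).mpr ⟨p, le_refl _, h''⟩).trans
              (List.prefix_append W β).isInfix
          · exact h''.trans (List.suffix_append _ _).isInfix
          · refine pedge_append.mpr (Or.inr (Or.inr ⟨?_, h2⟩))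
            rw [hWlast?]
            rw [hMplast?] at h1
            exact h1
        · exact ((hWedge u v).mpr ⟨q, Nat.lt_succ_iff.mp h', h⟩).trans
            (List.prefix_append W β).isInfix
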